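/- Let G and H be games over L5 such that G has mean C and H has mean D (in the sense of the recursively defined mean predicate). If C ≤ D then G ⊲ H, and if C < D then G ≤ H. -/

import Mathlib

universe u

/-- Combinatorial games over a poset `A` of atoms: either an atomic game `[a]` for an atom
`a : A`, or a composite game `⟨L|R⟩` where `L` and `R` are nonempty families of games
(the left and right options). -/
inductive PoGame (A : Type u) : Type (u + 1) where
  | atom : A → PoGame A
  | mk : (xl xr : Type u) → (xl → PoGame A) → (xr → PoGame A) →
      Nonempty xl → Nonempty xr → PoGame A

namespace SetTheory

/-- Normal-play pre-games (as in the older Mathlib's `SetTheory.PGame`, since removed). -/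
inductive PGame : Type (u + 1)
  | mk : ∀ α β : Type u, (α → PGame) → (β → PGame) → PGame

/-- The pre-game `0 = { | }` (as in the older Mathlib). -/
instance PGame.instZero : Zero PGame :=
  ⟨⟨PEmpty, PEmpty, PEmpty.elim, PEmpty.elim⟩⟩

end SetTheory

namespace PoGame

variable {A : Type u}

/-- `G` is an atomic game. -/
def IsAtomic : PoGame A → Prop
  | atom _ => True
  | mk _ _ _ _ _ _ => False

/-- `G` is a left option of the game given as second argument. -/
def IsLeftOption (G : PoGame A) : PoGame A → Prop
  | atom _ => False
  | mk _ _ L _ _ _ => ∃ i, L i = G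

/-- `G` is a right option of the game given as second argument. -/
def IsRightOption (G : PoGame A) : PoGame A → Prop
  | atom _ => False
  | mk _ _ _ R _ _ => ∃ j, R j = G

section Order

variable [PartialOrder A]

mutual
  /-- `Le G H` is the relation `G ≤ H` on games over the poset `A`, defined by mutual
  recursion with `Lf` (the relation `G ⊲ H`): `G ≤ H` iff every left option `G^L`
  satisfies `G^L ⊲ H`, every right option `H^R` satisfies `G ⊲ H^R`, and if `G` or `H`
  is atomic then `G ⊲ H`. -/
  inductive Le : PoGame A → PoGame A → Prop
    | intro (G H : PoGame A)
        (hL : ∀ G', IsLeftOption G' G → Lf G' H)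
        (hR : ∀ H', IsRightOption H' H → Lf G H')
        (hA : IsAtomic G ∨ IsAtomic H → Lf G H) : Le G H

  /-- `Lf G H` is the relation `G ⊲ H` on games over the poset `A`: it holds iff some
  right option `G^R` satisfies `G^R ≤ H`, or some left option `H^L` satisfies `G ≤ H^L`,
  or `G = [a]` and `H = [b]` are atomic with `a ≤ b` in `A`. -/
  inductive Lf : PoGame A → PoGame A → Prop
    | rightOption (G H G' : PoGame A) (h : IsRightOption G' G) (hle : Le G' H) : Lf G H
    | leftOption (G H H' : PoGame A) (h : IsLeftOption H' H) (hle : Le G H') : Lf G H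
    | atom (a b : A) (hab : a ≤ b) : Lf (atom a) (atom b)
end

/-- Two games are equivalent if `G ≤ H` and `H ≤ G`. -/
def GEquiv (G H : PoGame A) : Prop := Le G H ∧ Le H G

/-- `G` is locally monotone if `G ≤ G^L` for every left option `G^L` and `G^R ≤ G` for
every right option `G^R`. -/
def LocallyMonotone (G : PoGame A) : Prop :=
  (∀ G', IsLeftOption G' G → Le G G') ∧ (∀ G', IsRightOption G' G → Le G' G)

/-- `G` is an option (left or right) of `H`. -/
def IsOption (G H : PoGame A) : Prop := IsLeftOption G H ∨ IsRightOption G H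

/-- `G` is a position of `H`: `H` itself, an option of `H`, an option of an option, etc. -/
def IsPosition (G H : PoGame A) : Prop := Relation.ReflTransGen IsOption G H

/-- `G` is monotone if every position of `G` is locally monotone. -/
def Monotone (G : PoGame A) : Prop := ∀ K, IsPosition K G → LocallyMonotone K

end Order

/-- The 5-element linearly ordered set `L5 = {-3, -2, -1, 0, 1}`. -/
abbrev L5 : Type := {a : ℤ // -3 ≤ a ∧ a ≤ 1}

/-- `G` has mean `C`: an atomic game `[a]` has mean `a`, and a composite game has mean `C`
iff every left option has mean `C + 1` and every right option has mean `C - 1`. -/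
def HasMean : PoGame L5 → ℤ → Prop
  | atom a, C => (a : ℤ) = C
  | mk _ _ L R _ _, C => (∀ i, HasMean (L i) (C + 1)) ∧ (∀ j, HasMean (R j) (C - 1))

/-- The game `⟨G | H⟩` with a single left option `G` and a single right option `H`. -/
def ofPair (G H : PoGame A) : PoGame A :=
  mk PUnit PUnit (fun _ => G) (fun _ => H) ⟨PUnit.unit⟩ ⟨PUnit.unit⟩

/-- `⋆ = ⟨-1 | -3⟩`. -/
def star : PoGame L5 := ofPair (atom ⟨-1, by norm_num⟩) (atom ⟨-3, by norm_num⟩)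

/-- `M(G) = ⟨1 | G⟩`. -/
def M (G : PoGame L5) : PoGame L5 := ofPair (atom ⟨1, by norm_num⟩) G

/-- `P(G) = ⟨G | -2⟩`. -/
def P (G : PoGame L5) : PoGame L5 := ofPair G (atom ⟨-2, by norm_num⟩)

/-- `P⋆(G) = ⟨G | ⋆⟩`. -/
def Pstar (G : PoGame L5) : PoGame L5 := ofPair G star

/-- `Pn n G = P G` if `n` is odd, `P⋆ G` if `n` is even. -/
def Pn (n : ℕ) (G : PoGame L5) : PoGame L5 := if Odd n then P G else Pstar G

/-- The sequence `G_0 = [0]`, `G_{n+1} = M (Pn n (G_n))`. -/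
def Gseq : ℕ → PoGame L5
  | 0 => atom ⟨0, by norm_num⟩
  | n + 1 => M (Pn n (Gseq n))

/-- The normal-play game obtained from a game over `L5` by replacing every atom by the
normal-play game `0 = { | }`, keeping the tree of left and right options. -/
def np : PoGame L5 → SetTheory.PGame.{0}
  | atom _ => 0
  | mk xl xr L R _ _ => SetTheory.PGame.mk xl xr (fun i => np (L i)) (fun j => np (R j))

end PoGame

open PoGame in
/-- If `G` has mean `C` and `H` has mean `D`, then `C ≤ D` implies `G ⊲ H` and `C < D`
implies `G ≤ H`. -/
theorem stmt_0 (G H : PoGame L5) (C D : ℤ) (hG : HasMean G C) (hH : HasMean H D) :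
    (C ≤ D → Lf G H) ∧ (C < D → Le G H) := by
  revert C D hG hH
  induction G generalizing H with
  | atom a =>
    induction H with
    | atom b =>
      intro C D hG hH
      simp only [HasMean] at hG hH
      have hab : C ≤ D → a ≤ b := fun h => Subtype.coe_le_coe.mp (by omega)
      constructor
      · intro h; exact Lf.atom a b (hab h)
      · intro h
        refine Le.intro _ _ (fun G' hf => hf.elim) (fun H' hf => hf.elim) ?_
        intro _; exact Lf.atom a b (hab h.le)
    | mk yl yr L R hy1 hy2 ihL ihR =>
      intro C D hG hH
      obtain ⟨hHL, hHR⟩ := hH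
      have lf : C ≤ D → Lf (atom a) (mk yl yr L R hy1 hy2) := by
        intro h
        obtain ⟨i⟩ := hy1
        exact Lf.leftOption _ _ (L i) ⟨i, rfl⟩
          ((ihL i C (D + 1) hG (hHL i)).2 (by omega))
      refine ⟨lf, fun h => ?_⟩
      refine Le.intro _ _ (fun G' hf => hf.elim) ?_ (fun _ => lf h.le)
      rintro H' ⟨j, rfl⟩
      exact (ihR j C (D - 1) hG (hHR j)).1 (by omega)
  | mk xl xr Lx Rx hx1 hx2 ihLx ihRx =>
    intro C D hG hH
    obtain ⟨hGL, hGR⟩ := hG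
    have lf : C ≤ D → Lf (mk xl xr Lx Rx hx1 hx2) H := by
      intro h
      obtain ⟨j⟩ := hx2
      exact Lf.rightOption _ _ (Rx j) ⟨j, rfl⟩
        ((ihRx j H (C - 1) D (hGR j) hH).2 (by omega))
    refine ⟨lf, fun h => ?_⟩
    refine Le.intro _ _ ?_ ?_ ?_
    · rintro G' ⟨i, rfl⟩
      exact (ihLx i H (C + 1) D (hGL i) hH).1 (by omega)
    · intro H' hf
      have hH' : HasMean H' (D - 1) := by
        match H, hH, hf with
        | PoGame.mk yl yr L R hy1 hy2, hH, hf =>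
          obtain ⟨j, rfl⟩ := hf
          exact hH.2 j
      obtain ⟨j⟩ := hx2
      exact Lf.rightOption _ _ (Rx j) ⟨j, rfl⟩
        ((ihRx j H' (C - 1) (D - 1) (hGR j) hH').2 (by omega))
    · intro hat
      cases hat with
      | inl ha => exact ha.elim
      | inr hb => exact lf h.le
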